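/- For all real a, b with ab > 0 and c arbitrary, the circle g(x,y) = ab·(x - (a+b)/(2ab))² + (c+y)² - (a-b)²/(4ab) = 0 is an invariant algebraic curve of the system ẋ = 3(a+b)c x + 4y - 4abc x² - (a+b)xy, ẏ = (1/2)(3(a²+b²) - 2ab - 8abc²)x - 2(a+b)c y - ab(a+b)x² - 4abc xy - 2(a+b)y², with cofactor k(x,y) = -8abc x - 4(a+b)y; that is, p·∂g/∂x + q·∂g/∂y = k·g identically (in fact this polynomial identity holds for all real a, b, c). -/

import Mathlib

/-- The circle `g(x,y) = ab(x - (a+b)/(2ab))² + (c+y)² - (a-b)²/(4ab) = 0` is an invariant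
algebraic curve, with cofactor `k(x,y) = -8abcx - 4(a+b)y`, of the quadratic system obtained
from Yablonskii's system by the Cremona transformation (C2). -/
theorem yablonskii_image_circle_invariant (a b c : ℝ) (hab : a * b > 0) :
    ∀ x y : ℝ,
      (3 * (a + b) * c * x + 4 * y - 4 * a * b * c * x ^ 2 - (a + b) * x * y) *
          deriv (fun t : ℝ =>
            a * b * (t - (a + b) / (2 * (a * b))) ^ 2 + (c + y) ^ 2 -
              (a - b) ^ 2 / (4 * (a * b))) x +
        ((1 / 2) * (3 * (a ^ 2 + b ^ 2) - 2 * a * b - 8 * a * b * c ^ 2) * x -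
            2 * (a + b) * c * y - a * b * (a + b) * x ^ 2 - 4 * a * b * c * x * y -
            2 * (a + b) * y ^ 2) *
          deriv (fun t : ℝ =>
            a * b * (x - (a + b) / (2 * (a * b))) ^ 2 + (c + t) ^ 2 -
              (a - b) ^ 2 / (4 * (a * b))) y =
      (-8 * a * b * c * x - 4 * (a + b) * y) *
        (a * b * (x - (a + b) / (2 * (a * b))) ^ 2 + (c + y) ^ 2 -
          (a - b) ^ 2 / (4 * (a * b))) := by
  intro x y
  have hne : a * b ≠ 0 := ne_of_gt hab
  have h1 : deriv (fun t : ℝ =>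
      a * b * (t - (a + b) / (2 * (a * b))) ^ 2 + (c + y) ^ 2 -
        (a - b) ^ 2 / (4 * (a * b))) x
      = a * b * (2 * (x - (a + b) / (2 * (a * b)))) := by
    have : HasDerivAt (fun t : ℝ =>
        a * b * (t - (a + b) / (2 * (a * b))) ^ 2 + (c + y) ^ 2 -
          (a - b) ^ 2 / (4 * (a * b)))
        (a * b * (2 * (x - (a + b) / (2 * (a * b))) * 1)) x := by
      have h := (((hasDerivAt_id x).sub_const ((a + b) / (2 * (a * b)))).pow 2).const_mul (a * b)
      simpa using (h.add_const ((c + y) ^ 2)).sub_const ((a - b) ^ 2 / (4 * (a * b)))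
    rw [this.deriv]; ring
  have h2 : deriv (fun t : ℝ =>
      a * b * (x - (a + b) / (2 * (a * b))) ^ 2 + (c + t) ^ 2 -
        (a - b) ^ 2 / (4 * (a * b))) y = 2 * (c + y) := by
    have : HasDerivAt (fun t : ℝ =>
        a * b * (x - (a + b) / (2 * (a * b))) ^ 2 + (c + t) ^ 2 -
          (a - b) ^ 2 / (4 * (a * b))) (2 * (c + y) * 1) y := by
      have h := ((hasDerivAt_id y).const_add c).pow 2
      simpa using (h.const_add (a * b * (x - (a + b) / (2 * (a * b))) ^ 2)).sub_const
        ((a - b) ^ 2 / (4 * (a * b)))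
    rw [this.deriv]; ring
  rw [h1, h2]
  have ha : a ≠ 0 := left_ne_zero_of_mul hne
  have hb : b ≠ 0 := right_ne_zero_of_mul hne
  field_simp
  ring
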